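/- Let n > 1 be odd and let Φ_n(q) ∈ ℤ[q] be the n-th cyclotomic polynomial. Then for every k ≥ 0, the congruence (q^(1-n); q²)_k · (q^(1+n); q²)_k ≡ (q; q²)_k² (mod Φ_n(q)²) holds in the ring ℤ[q, q⁻¹] (equivalently, after multiplying by a suitable power of q, in ℤ[q]). -/

import Mathlib

open LaurentPolynomial Finset

lemma prod_sub_prod_dvd' {R : Type*} [CommRing R] (d : R) (s : Finset ℕ) (f g : ℕ → R)
    (h : ∀ i ∈ s, d ∣ f i - g i) : d ∣ (∏ i ∈ s, f i) - ∏ i ∈ s, g i := by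
  classical
  induction s using Finset.induction_on with
  | empty => simp
  | insert _ _ hx ih =>
    rename_i a s
    rw [Finset.prod_insert hx, Finset.prod_insert hx]
    have h1 : d ∣ f a - g a := h a (Finset.mem_insert_self a s)
    have h2 : d ∣ (∏ i ∈ s, f i) - ∏ i ∈ s, g i :=
      ih fun i hi => h i (Finset.mem_insert_of_mem hi)
    have : f a * ∏ i ∈ s, f i - g a * ∏ i ∈ s, g i
        = (f a - g a) * ∏ i ∈ s, f i + g a * ((∏ i ∈ s, f i) - ∏ i ∈ s, g i) := by ring
    rw [this]
    exact dvd_add (h1.mul_right _) (h2.mul_left _)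

/-- For odd `n > 1` and all `k`, `(q^(1-n); q²)_k (q^(1+n); q²)_k ≡ (q; q²)_k²
(mod Φ_n(q)²)` in the Laurent polynomial ring `ℤ[q, q⁻¹]`. -/
theorem stmt1 (n : ℕ) (hn : 1 < n) (hodd : Odd n) (k : ℕ) :
    ((Polynomial.cyclotomic n ℤ).toLaurent) ^ 2 ∣
      (∏ i ∈ range k, (1 - T (1 - (n : ℤ) + 2 * i)))
        * (∏ i ∈ range k, (1 - T (1 + (n : ℤ) + 2 * i)))
      - (∏ i ∈ range k, (1 - T (1 + 2 * (i : ℤ)))) ^ 2 := by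
  have h1 : (Polynomial.cyclotomic n ℤ).toLaurent ∣ T (n : ℤ) - 1 := by
    have hd := Polynomial.cyclotomic.dvd_X_pow_sub_one n ℤ
    have := map_dvd (Polynomial.toLaurent (R := ℤ)) hd
    simpa [map_sub, map_pow, Polynomial.toLaurent_X, T_pow] using this
  rw [← Finset.prod_mul_distrib, ← Finset.prod_pow]
  apply prod_sub_prod_dvd'
  intro i _
  have e1 : (1 : ℤ) + n + 2 * i = (1 - n + 2 * i) + n + n := by ring
  have e2 : (1 : ℤ) + 2 * i = (1 - n + 2 * i) + n := by ring
  have t1 : (T ((1:ℤ) - n + 2*i + n + n) : ℤ[T;T⁻¹]) = T ((1:ℤ) - n + 2*(i:ℤ)) * T (n:ℤ) * T (n:ℤ) := by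
    rw [T_add, T_add]
  have t2 : (T ((1:ℤ) - n + 2*i + n) : ℤ[T;T⁻¹]) = T ((1:ℤ) - n + 2*(i:ℤ)) * T (n:ℤ) := T_add _ _
  rw [e1, e2, t1, t2]
  have key : ((1:ℤ[T;T⁻¹]) - T (1 - (n:ℤ) + 2 * (i:ℤ)))
        * (1 - T (1 - (n:ℤ) + 2 * (i:ℤ)) * T (n:ℤ) * T (n:ℤ))
      - (1 - T (1 - (n:ℤ) + 2 * (i:ℤ)) * T (n:ℤ)) ^ 2
      = -T (1 - (n:ℤ) + 2 * (i:ℤ)) * (T (n:ℤ) - 1) ^ 2 := by ring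
  rw [key]
  exact Dvd.dvd.mul_left (pow_dvd_pow_of_dvd h1 2) _
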